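/- For q(x,y,z) = x² + y² − z², the subspace {v ∈ ℝ³ : ‖v‖ = 1 and q(v) ≠ 0} of the unit sphere has exactly three connected components (its set of connected components is a three-element set). -/

import Mathlib

open Set Metric Function

noncomputable section StmtSixAux

private def aQ : ℝ := Real.sqrt (1/2)
private lemma aQ_pos : 0 < aQ := Real.sqrt_pos.2 (by norm_num)
private lemma aQ_sq : aQ ^ 2 = 1/2 := Real.sq_sqrt (by norm_num)
private lemma aQ_lt_one : aQ < 1 := by nlinarith [aQ_sq, aQ_pos]

private lemma sum3 (v : EuclideanSpace ℝ (Fin 3)) (h : ‖v‖ = 1) :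
    v 0 ^ 2 + v 1 ^ 2 + v 2 ^ 2 = 1 := by
  rw [EuclideanSpace.norm_eq] at h
  simpa [Fin.sum_univ_three, sq_abs] using Real.sqrt_eq_one.mp h

private lemma sum2 (u : EuclideanSpace ℝ (Fin 2)) (h : ‖u‖ = 1) :
    u 0 ^ 2 + u 1 ^ 2 = 1 := by
  rw [EuclideanSpace.norm_eq] at h
  simpa [Fin.sum_univ_two, sq_abs] using Real.sqrt_eq_one.mp h

private def S0 : Set (EuclideanSpace ℝ (Fin 3)) := {v | ‖v‖ = 1 ∧ v 2 < -aQ}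
private def S1 : Set (EuclideanSpace ℝ (Fin 3)) := {v | ‖v‖ = 1 ∧ -aQ < v 2 ∧ v 2 < aQ}
private def S2 : Set (EuclideanSpace ℝ (Fin 3)) := {v | ‖v‖ = 1 ∧ aQ < v 2}

private lemma proj2_linear : IsLinearMap ℝ (fun w : EuclideanSpace ℝ (Fin 3) => w 2) :=
  ⟨fun _ _ => rfl, fun _ _ => rfl⟩

private lemma contOn_normalize (D : Set (EuclideanSpace ℝ (Fin 3))) (hD : ∀ w ∈ D, w ≠ 0) :
    ContinuousOn (fun w : EuclideanSpace ℝ (Fin 3) => ‖w‖⁻¹ • w) D :=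
  (continuous_norm.continuousOn.inv₀ fun w hw => norm_ne_zero_iff.mpr (hD w hw)).smul
    continuous_id.continuousOn

private lemma preconS2 : IsPreconnected S2 := by
  set D : Set (EuclideanSpace ℝ (Fin 3)) := {w | ‖w‖ ≤ 1 ∧ aQ < w 2} with hDdef
  have hD : Convex ℝ D := by
    have h1 : Convex ℝ {w : EuclideanSpace ℝ (Fin 3) | ‖w‖ ≤ 1} := by
      simpa [closedBall, dist_zero_right] using convex_closedBall (0 : EuclideanSpace ℝ (Fin 3)) 1
    exact h1.inter (convex_halfSpace_gt proj2_linear aQ)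
  have hne : ∀ w ∈ D, w ≠ 0 := by
    rintro w ⟨_, hw2⟩ rfl
    have h0 : (0 : EuclideanSpace ℝ (Fin 3)) 2 = 0 := rfl
    rw [h0] at hw2
    exact lt_asymm aQ_pos hw2
  have himg : S2 = (fun w : EuclideanSpace ℝ (Fin 3) => ‖w‖⁻¹ • w) '' D := by
    apply Set.eq_of_subset_of_subset
    · rintro v ⟨hv1, hv2⟩
      exact ⟨v, ⟨hv1.le, hv2⟩, by show ‖v‖⁻¹ • v = v; rw [hv1]; simp⟩
    · rintro _ ⟨w, ⟨hw1, hw2⟩, rfl⟩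
      have hw0 : w ≠ 0 := hne w ⟨hw1, hw2⟩
      have hn : 0 < ‖w‖ := norm_pos_iff.mpr hw0
      have hinv : 1 ≤ ‖w‖⁻¹ := (one_le_inv₀ hn).mpr hw1
      refine ⟨?_, ?_⟩
      · show ‖‖w‖⁻¹ • w‖ = 1
        rw [norm_smul, norm_inv, norm_norm, inv_mul_cancel₀ hn.ne']
      · show _
        rw [show (fun w : EuclideanSpace ℝ (Fin 3) => ‖w‖⁻¹ • w) w 2 = ‖w‖⁻¹ * w 2 from rfl]
        have : w 2 ≤ ‖w‖⁻¹ * w 2 := by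
          nlinarith [aQ_pos, hw2]
        linarith
  rw [himg]
  exact (hD.isPreconnected).image _ (contOn_normalize D hne)

private lemma preconS0 : IsPreconnected S0 := by
  set D : Set (EuclideanSpace ℝ (Fin 3)) := {w | ‖w‖ ≤ 1 ∧ w 2 < -aQ} with hDdef
  have hD : Convex ℝ D := by
    have h1 : Convex ℝ {w : EuclideanSpace ℝ (Fin 3) | ‖w‖ ≤ 1} := by
      simpa [closedBall, dist_zero_right] using convex_closedBall (0 : EuclideanSpace ℝ (Fin 3)) 1
    exact h1.inter (convex_halfSpace_lt proj2_linear (-aQ))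
  have hne : ∀ w ∈ D, w ≠ 0 := by
    rintro w ⟨_, hw2⟩ rfl
    have h0 : (0 : EuclideanSpace ℝ (Fin 3)) 2 = 0 := rfl
    rw [h0] at hw2
    linarith [aQ_pos]
  have himg : S0 = (fun w : EuclideanSpace ℝ (Fin 3) => ‖w‖⁻¹ • w) '' D := by
    apply Set.eq_of_subset_of_subset
    · rintro v ⟨hv1, hv2⟩
      exact ⟨v, ⟨hv1.le, hv2⟩, by show ‖v‖⁻¹ • v = v; rw [hv1]; simp⟩
    · rintro _ ⟨w, ⟨hw1, hw2⟩, rfl⟩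
      have hw0 : w ≠ 0 := hne w ⟨hw1, hw2⟩
      have hn : 0 < ‖w‖ := norm_pos_iff.mpr hw0
      have hinv : 1 ≤ ‖w‖⁻¹ := (one_le_inv₀ hn).mpr hw1
      refine ⟨?_, ?_⟩
      · show ‖‖w‖⁻¹ • w‖ = 1
        rw [norm_smul, norm_inv, norm_norm, inv_mul_cancel₀ hn.ne']
      · show _
        rw [show (fun w : EuclideanSpace ℝ (Fin 3) => ‖w‖⁻¹ • w) w 2 = ‖w‖⁻¹ * w 2 from rfl]
        have : ‖w‖⁻¹ * w 2 ≤ w 2 := by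
          nlinarith [aQ_pos, hw2]
        linarith
  rw [himg]
  exact (hD.isPreconnected).image _ (contOn_normalize D hne)

private def Φ : EuclideanSpace ℝ (Fin 2) × ℝ → EuclideanSpace ℝ (Fin 3) := fun p =>
  (WithLp.equiv 2 (Fin 3 → ℝ)).symm
    ![Real.sqrt (1 - p.2 ^ 2) * p.1 0, Real.sqrt (1 - p.2 ^ 2) * p.1 1, p.2]

private lemma Φ_apply (p : EuclideanSpace ℝ (Fin 2) × ℝ) (i : Fin 3) :
    Φ p i = ![Real.sqrt (1 - p.2 ^ 2) * p.1 0, Real.sqrt (1 - p.2 ^ 2) * p.1 1, p.2] i := rfl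

private lemma Φ_cont : Continuous Φ := by
  apply (PiLp.continuous_toLp 2 (fun _ : Fin 3 => ℝ)).comp
  apply continuous_pi
  intro i
  fin_cases i <;> simp <;> fun_prop

private lemma preconS1 : IsPreconnected S1 := by
  have hrank : 1 < Module.rank ℝ (EuclideanSpace ℝ (Fin 2)) := by
    rw [← Module.finrank_eq_rank, finrank_euclideanSpace_fin]
    exact_mod_cast one_lt_two
  set D : Set (EuclideanSpace ℝ (Fin 2) × ℝ) :=
    (sphere (0 : EuclideanSpace ℝ (Fin 2)) 1) ×ˢ Ioo (-aQ) aQ with hDdef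
  have hD : IsPreconnected D :=
    ((isConnected_sphere hrank 0 zero_le_one).isPreconnected).prod isPreconnected_Ioo
  have himg : S1 = Φ '' D := by
    apply Set.eq_of_subset_of_subset
    · rintro v ⟨hv1, hv2, hv3⟩
      have hz2 : v 2 ^ 2 < 1/2 := by
        nlinarith [aQ_sq, mul_pos (sub_pos.2 hv3) (show (0:ℝ) < aQ + v 2 by linarith)]
      have hc : 0 < Real.sqrt (1 - v 2 ^ 2) := Real.sqrt_pos.2 (by nlinarith)
      have hc2 : Real.sqrt (1 - v 2 ^ 2) ^ 2 = 1 - v 2 ^ 2 := Real.sq_sqrt (by nlinarith)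
      set c := Real.sqrt (1 - v 2 ^ 2)
      set u : EuclideanSpace ℝ (Fin 2) :=
        (WithLp.equiv 2 (Fin 2 → ℝ)).symm ![v 0 / c, v 1 / c] with hu
      have hsum : v 0 ^ 2 + v 1 ^ 2 + v 2 ^ 2 = 1 := by
        rw [EuclideanSpace.norm_eq] at hv1
        simpa [Fin.sum_univ_three, sq_abs] using Real.sqrt_eq_one.mp hv1
      have hu0 : u 0 = v 0 / c := rfl
      have hu1 : u 1 = v 1 / c := rfl
      have hun : ‖u‖ = 1 := by
        rw [EuclideanSpace.norm_eq, Fin.sum_univ_two, hu0, hu1]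
        rw [Real.sqrt_eq_one]
        rw [Real.norm_eq_abs, Real.norm_eq_abs, sq_abs, sq_abs]
        field_simp
        nlinarith
      refine ⟨(u, v 2), ⟨mem_sphere_zero_iff_norm.mpr hun, hv2, hv3⟩, ?_⟩
      ext i
      rw [Φ_apply]
      fin_cases i <;> simp [hu0, hu1] <;> field_simp <;> exact mul_comm _ _
    · rintro _ ⟨⟨u, z⟩, ⟨hu, hz⟩, rfl⟩
      rw [mem_sphere_zero_iff_norm] at hu
      simp only [mem_Ioo] at hz
      have hz2 : z ^ 2 < 1/2 := by
        rcases hz with ⟨h1, h2⟩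
        nlinarith [aQ_sq, mul_pos (sub_pos.2 h2) (show (0:ℝ) < aQ + z by linarith)]
      have hc2 : Real.sqrt (1 - z ^ 2) ^ 2 = 1 - z ^ 2 := Real.sq_sqrt (by nlinarith)
      have hu2 := sum2 u hu
      refine ⟨?_, ?_, ?_⟩
      · rw [EuclideanSpace.norm_eq, Fin.sum_univ_three, Real.sqrt_eq_one]
        simp only [Φ_apply, Real.norm_eq_abs, sq_abs, Matrix.cons_val_zero, Matrix.cons_val_one,
          Matrix.head_cons, Matrix.cons_val_two, Matrix.tail_cons]
        nlinarith
      · show -aQ < Φ (u, z) 2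
        rw [Φ_apply]; simpa using hz.1
      · show Φ (u, z) 2 < aQ
        rw [Φ_apply]; simpa using hz.2
  rw [himg]
  exact hD.image _ Φ_cont.continuousOn

private def Carrier : Set (EuclideanSpace ℝ (Fin 3)) :=
  {v | ‖v‖ = 1 ∧ v 0 ^ 2 + v 1 ^ 2 - v 2 ^ 2 ≠ 0}

private lemma S0_sub : S0 ⊆ Carrier := by
  rintro v ⟨h1, h2⟩
  refine ⟨h1, fun hq => ?_⟩
  have hs := sum3 v h1
  nlinarith [aQ_sq, aQ_pos]

private lemma S1_sub : S1 ⊆ Carrier := by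
  rintro v ⟨h1, h2, h3⟩
  refine ⟨h1, fun hq => ?_⟩
  have hs := sum3 v h1
  nlinarith [aQ_sq, mul_pos (sub_pos.2 h3) (show (0:ℝ) < aQ + v 2 by linarith)]

private lemma S2_sub : S2 ⊆ Carrier := by
  rintro v ⟨h1, h2⟩
  refine ⟨h1, fun hq => ?_⟩
  have hs := sum3 v h1
  nlinarith [aQ_sq, aQ_pos]

private def fQ (v : {v : EuclideanSpace ℝ (Fin 3) // ‖v‖ = 1 ∧ v 0 ^ 2 + v 1 ^ 2 - v 2 ^ 2 ≠ 0}) :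
    Fin 3 :=
  if v.1 2 < -aQ then 0 else if v.1 2 < aQ then 1 else 2

private lemma key (v : {v : EuclideanSpace ℝ (Fin 3) // ‖v‖ = 1 ∧ v 0 ^ 2 + v 1 ^ 2 - v 2 ^ 2 ≠ 0}) :
    v.1 2 ^ 2 ≠ 1/2 := by
  intro h
  have hs := sum3 v.1 v.2.1
  exact v.2.2 (by linarith)

private lemma fQ_eq_zero (v) : fQ v = 0 ↔ v.1 2 < -aQ := by
  unfold fQ
  split_ifs with h h'
  · simp [h]
  · simpa using h
  · simpa using h

private lemma fQ_eq_one (v) : fQ v = 1 ↔ (-aQ < v.1 2 ∧ v.1 2 < aQ) := by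
  have hk := key v
  unfold fQ
  split_ifs with h h'
  · constructor
    · intro hc; exact absurd hc (by decide)
    · rintro ⟨h1, _⟩; linarith
  · constructor
    · intro _
      refine ⟨lt_of_le_of_ne (not_lt.mp h) ?_, h'⟩
      intro he
      exact hk (by rw [← he]; simp [neg_pow, aQ_sq])
    · intro _; rfl
  · constructor
    · intro hc; exact absurd hc (by decide)
    · rintro ⟨_, h2⟩; exact absurd h2 h'

private lemma fQ_eq_two (v) : fQ v = 2 ↔ aQ < v.1 2 := by
  have hk := key v
  unfold fQ
  split_ifs with h h'
  · constructor
    · intro hc; exact absurd hc (by decide)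
    · intro h2; linarith [aQ_pos]
  · constructor
    · intro hc; exact absurd hc (by decide)
    · intro h2; exact absurd h2 (lt_asymm h')
  · constructor
    · intro _
      refine lt_of_le_of_ne (not_lt.mp h') ?_
      intro he
      exact hk (by rw [← he]; exact aQ_sq)
    · intro _; rfl

private def ptE (x y z : ℝ) : EuclideanSpace ℝ (Fin 3) :=
  (WithLp.equiv 2 (Fin 3 → ℝ)).symm ![x, y, z]

private lemma ptE_mem (x y z : ℝ) (h : x ^ 2 + y ^ 2 + z ^ 2 = 1)
    (hq : x ^ 2 + y ^ 2 - z ^ 2 ≠ 0) :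
    ‖ptE x y z‖ = 1 ∧ (ptE x y z) 0 ^ 2 + (ptE x y z) 1 ^ 2 - (ptE x y z) 2 ^ 2 ≠ 0 := by
  have h0 : (ptE x y z) 0 = x := rfl
  have h1 : (ptE x y z) 1 = y := rfl
  have h2 : (ptE x y z) 2 = z := rfl
  refine ⟨?_, by rw [h0, h1, h2]; exact hq⟩
  rw [EuclideanSpace.norm_eq, Fin.sum_univ_three, h0, h1, h2, Real.sqrt_eq_one]
  simpa [Real.norm_eq_abs, sq_abs] using h

end StmtSixAux

/-- For `q(x,y,z) = x² + y² − z²`, the part of the unit sphere where `q ≠ 0` has exactly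
three connected components. -/
theorem stmt_6 :
    Nonempty
      (ConnectedComponents
          {v : EuclideanSpace ℝ (Fin 3) // ‖v‖ = 1 ∧ v 0 ^ 2 + v 1 ^ 2 - v 2 ^ 2 ≠ 0} ≃
        Fin 3) := by
  classical
  have hg : Continuous
      (fun v : {v : EuclideanSpace ℝ (Fin 3) // ‖v‖ = 1 ∧ v 0 ^ 2 + v 1 ^ 2 - v 2 ^ 2 ≠ 0} =>
        v.1 2) :=
    (EuclideanSpace.proj (2 : Fin 3) : EuclideanSpace ℝ (Fin 3) →L[ℝ] ℝ).continuous.comp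
      continuous_subtype_val
  -- fibers of fQ
  have h0 : fQ ⁻¹' {0} = (Subtype.val) ⁻¹' S0 := by
    ext v
    rw [Set.mem_preimage, Set.mem_singleton_iff, fQ_eq_zero, Set.mem_preimage]
    exact ⟨fun h => ⟨v.2.1, h⟩, fun h => h.2⟩
  have h1 : fQ ⁻¹' {1} = (Subtype.val) ⁻¹' S1 := by
    ext v
    rw [Set.mem_preimage, Set.mem_singleton_iff, fQ_eq_one, Set.mem_preimage]
    exact ⟨fun h => ⟨v.2.1, h⟩, fun h => h.2⟩
  have h2 : fQ ⁻¹' {2} = (Subtype.val) ⁻¹' S2 := by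
    ext v
    rw [Set.mem_preimage, Set.mem_singleton_iff, fQ_eq_two, Set.mem_preimage]
    exact ⟨fun h => ⟨v.2.1, h⟩, fun h => h.2⟩
  -- preconnectedness of the fibers
  have hpre : ∀ S : Set (EuclideanSpace ℝ (Fin 3)), IsPreconnected S → S ⊆ Carrier →
      IsPreconnected ((Subtype.val :
        {v : EuclideanSpace ℝ (Fin 3) // ‖v‖ = 1 ∧ v 0 ^ 2 + v 1 ^ 2 - v 2 ^ 2 ≠ 0} →
        EuclideanSpace ℝ (Fin 3)) ⁻¹' S) := by
    intro S hS hsub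
    have key : IsPreconnected ((Subtype.val :
        {v : EuclideanSpace ℝ (Fin 3) // ‖v‖ = 1 ∧ v 0 ^ 2 + v 1 ^ 2 - v 2 ^ 2 ≠ 0} →
        EuclideanSpace ℝ (Fin 3)) '' (Subtype.val ⁻¹' S)) := by
      have he : (Subtype.val :
          {v : EuclideanSpace ℝ (Fin 3) // ‖v‖ = 1 ∧ v 0 ^ 2 + v 1 ^ 2 - v 2 ^ 2 ≠ 0} →
          EuclideanSpace ℝ (Fin 3)) '' (Subtype.val ⁻¹' S) = S :=
        Set.image_preimage_eq_of_subset (by rw [Subtype.range_coe_subtype]; exact hsub)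
      rw [he]
      exact hS
    exact Topology.IsInducing.subtypeVal.isPreconnected_image.mp key
  -- openness of the fibers
  have o0 : IsOpen ((Subtype.val :
      {v : EuclideanSpace ℝ (Fin 3) // ‖v‖ = 1 ∧ v 0 ^ 2 + v 1 ^ 2 - v 2 ^ 2 ≠ 0} →
      EuclideanSpace ℝ (Fin 3)) ⁻¹' S0) := by
    have he : (Subtype.val ⁻¹' S0 :
        Set {v : EuclideanSpace ℝ (Fin 3) // ‖v‖ = 1 ∧ v 0 ^ 2 + v 1 ^ 2 - v 2 ^ 2 ≠ 0}) =
        (fun v => v.1 2) ⁻¹' (Set.Iio (-aQ)) := by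
      ext v
      exact ⟨fun h => h.2, fun h => ⟨v.2.1, h⟩⟩
    rw [he]
    exact isOpen_Iio.preimage hg
  have o1 : IsOpen ((Subtype.val :
      {v : EuclideanSpace ℝ (Fin 3) // ‖v‖ = 1 ∧ v 0 ^ 2 + v 1 ^ 2 - v 2 ^ 2 ≠ 0} →
      EuclideanSpace ℝ (Fin 3)) ⁻¹' S1) := by
    have he : (Subtype.val ⁻¹' S1 :
        Set {v : EuclideanSpace ℝ (Fin 3) // ‖v‖ = 1 ∧ v 0 ^ 2 + v 1 ^ 2 - v 2 ^ 2 ≠ 0}) =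
        (fun v => v.1 2) ⁻¹' (Set.Ioo (-aQ) aQ) := by
      ext v
      exact ⟨fun h => h.2, fun h => ⟨v.2.1, h⟩⟩
    rw [he]
    exact isOpen_Ioo.preimage hg
  have o2 : IsOpen ((Subtype.val :
      {v : EuclideanSpace ℝ (Fin 3) // ‖v‖ = 1 ∧ v 0 ^ 2 + v 1 ^ 2 - v 2 ^ 2 ≠ 0} →
      EuclideanSpace ℝ (Fin 3)) ⁻¹' S2) := by
    have he : (Subtype.val ⁻¹' S2 :
        Set {v : EuclideanSpace ℝ (Fin 3) // ‖v‖ = 1 ∧ v 0 ^ 2 + v 1 ^ 2 - v 2 ^ 2 ≠ 0}) =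
        (fun v => v.1 2) ⁻¹' (Set.Ioi aQ) := by
      ext v
      exact ⟨fun h => h.2, fun h => ⟨v.2.1, h⟩⟩
    rw [he]
    exact isOpen_Ioi.preimage hg
  -- continuity of fQ
  have hfc : Continuous fQ := by
    apply IsLocallyConstant.continuous
    rw [IsLocallyConstant.iff_isOpen_fiber]
    intro y
    have hall : ∀ j : Fin 3, j = 0 ∨ j = 1 ∨ j = 2 := by decide
    have hy : y = 0 ∨ y = 1 ∨ y = 2 := hall y
    rcases hy with rfl | rfl | rfl
    · rw [h0]; exact o0
    · rw [h1]; exact o1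
    · rw [h2]; exact o2
  -- the lift
  refine ⟨Equiv.ofBijective hfc.connectedComponentsLift ⟨?_, ?_⟩⟩
  · intro x y hxy
    obtain ⟨a, rfl⟩ := ConnectedComponents.surjective_coe x
    obtain ⟨b, rfl⟩ := ConnectedComponents.surjective_coe y
    rw [Continuous.connectedComponentsLift_apply_coe,
      Continuous.connectedComponentsLift_apply_coe] at hxy
    rw [ConnectedComponents.coe_eq_coe]
    have step : ∀ S : Set {v : EuclideanSpace ℝ (Fin 3) //
        ‖v‖ = 1 ∧ v 0 ^ 2 + v 1 ^ 2 - v 2 ^ 2 ≠ 0}, IsPreconnected S → a ∈ S → b ∈ S →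
        connectedComponent a = connectedComponent b := by
      intro S hS ha hb
      exact connectedComponent_eq (hS.subset_connectedComponent ha hb)
    have hcase : fQ a = 0 ∨ fQ a = 1 ∨ fQ a = 2 := by
      have : ∀ i : Fin 3, i = 0 ∨ i = 1 ∨ i = 2 := by decide
      exact this _
    rcases hcase with hc | hc | hc
    · refine step _ (hpre S0 preconS0 S0_sub) ?_ ?_
      · exact ⟨a.2.1, (fQ_eq_zero a).mp hc⟩
      · exact ⟨b.2.1, (fQ_eq_zero b).mp (hxy ▸ hc)⟩
    · refine step _ (hpre S1 preconS1 S1_sub) ?_ ?_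
      · exact ⟨a.2.1, (fQ_eq_one a).mp hc⟩
      · exact ⟨b.2.1, (fQ_eq_one b).mp (hxy ▸ hc)⟩
    · refine step _ (hpre S2 preconS2 S2_sub) ?_ ?_
      · exact ⟨a.2.1, (fQ_eq_two a).mp hc⟩
      · exact ⟨b.2.1, (fQ_eq_two b).mp (hxy ▸ hc)⟩
  · intro i
    have hall : ∀ j : Fin 3, j = 0 ∨ j = 1 ∨ j = 2 := by decide
    have hi : i = 0 ∨ i = 1 ∨ i = 2 := hall i
    rcases hi with rfl | rfl | rfl
    · refine ⟨ConnectedComponents.mk ⟨ptE 0 0 (-1),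
        ptE_mem 0 0 (-1) (by norm_num) (by norm_num)⟩, ?_⟩
      refine (hfc.connectedComponentsLift_apply_coe _).trans ?_
      rw [fQ_eq_zero]
      show (-1 : ℝ) < -aQ
      linarith [aQ_lt_one]
    · refine ⟨ConnectedComponents.mk ⟨ptE 1 0 0,
        ptE_mem 1 0 0 (by norm_num) (by norm_num)⟩, ?_⟩
      refine (hfc.connectedComponentsLift_apply_coe _).trans ?_
      rw [fQ_eq_one]
      constructor
      · show -aQ < (0 : ℝ); linarith [aQ_pos]
      · show (0 : ℝ) < aQ; exact aQ_pos
    · refine ⟨ConnectedComponents.mk ⟨ptE 0 0 1,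
        ptE_mem 0 0 1 (by norm_num) (by norm_num)⟩, ?_⟩
      refine (hfc.connectedComponentsLift_apply_coe _).trans ?_
      rw [fQ_eq_two]
      show aQ < (1 : ℝ)
      exact aQ_lt_one
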